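/- arXiv:2012.12746 — 3 statements merged into one kernel-verified Lean document; each statement's English description precedes it below -/
import Mathlib

section
/- For every positive integer N there exist positive integers A and B such that the system 4A = u² + v² + w², 4B = u⁴ + v⁴ + w⁴ has at least N distinct integral solutions (u, v, w) with u ≥ v ≥ w ≥ 0. -/
namespace Stmt6Aux

/-- `c i = (i+7)^2 + 3`. -/
def c (i : ℕ) : ℤ := ((i : ℤ) + 7) ^ 2 + 3

lemma c_pos (i : ℕ) : 0 < c i := by
  have : (0:ℤ) ≤ ((i : ℤ) + 7) ^ 2 := sq_nonneg _
  unfold c; linarith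

/-- product of all `c j` for `j < N`. -/
def P (N : ℕ) : ℤ := ∏ j ∈ Finset.range N, c j

lemma P_pos (N : ℕ) : 0 < P N :=
  Finset.prod_pos fun j _ => c_pos j

/-- scaling factor. -/
def d (N i : ℕ) : ℤ := 2 * ∏ j ∈ (Finset.range N).erase i, c j

lemma d_pos (N i : ℕ) : 0 < d N i := by
  have h : 0 < ∏ j ∈ (Finset.range N).erase i, c j :=
    Finset.prod_pos fun j _ => c_pos j
  unfold d; linarith

lemma d_mul_c (N i : ℕ) (hi : i ∈ Finset.range N) : d N i * c i = 2 * P N := by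
  unfold d P
  rw [mul_assoc, Finset.prod_erase_mul _ _ hi]

/-- the triple associated to index `i`. -/
def f (N i : ℕ) : ℤ × ℤ × ℤ :=
  ( 2 * (d N i * (((i:ℤ)+7)^2 - 3)),
    d N i * (((i:ℤ)+7)^2 - 3) + 3 * (2 * ((i:ℤ)+7) * d N i),
    d N i * (((i:ℤ)+7)^2 - 3) - 3 * (2 * ((i:ℤ)+7) * d N i) )

lemma k_big (i : ℕ) : (7:ℤ) ≤ (i:ℤ) + 7 := by
  have : (0:ℤ) ≤ (i:ℤ) := Int.natCast_nonneg i
  linarith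

end Stmt6Aux

open Stmt6Aux in
/-- Claim 5.9: the system `4A = u² + v² + w²`, `4B = u⁴ + v⁴ + w⁴` admits
arbitrarily many ordered nonnegative integer solutions. -/
theorem stmt6 (N : ℕ) (hN : 0 < N) :
    ∃ A B : ℤ, 0 < A ∧ 0 < B ∧ ∃ S : Finset (ℤ × ℤ × ℤ),
      N ≤ S.card ∧ ∀ p ∈ S,
        p.1 ≥ p.2.1 ∧ p.2.1 ≥ p.2.2 ∧ p.2.2 ≥ 0 ∧
        4 * A = p.1 ^ 2 + p.2.1 ^ 2 + p.2.2 ^ 2 ∧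
        4 * B = p.1 ^ 4 + p.2.1 ^ 4 + p.2.2 ^ 4 := by
  have hP := P_pos N
  refine ⟨6 * P N ^ 2, 72 * P N ^ 4,
    by have := sq_nonneg (P N); nlinarith,
    by nlinarith [pow_pos hP 4],
    (Finset.range N).image (f N), ?_, ?_⟩
  · -- cardinality: f is injective on range N
    have hinj : Set.InjOn (f N) (Finset.range N) := by
      intro i hi j hj hij
      have h1 := congrArg Prod.fst hij
      simp only [f] at h1
      have hdci := d_mul_c N i (by simpa using hi)
      have hdcj := d_mul_c N j (by simpa using hj)
      have key : 4 * P N * (((i:ℤ)+7)^2 - 3) * c j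
          = 4 * P N * (((j:ℤ)+7)^2 - 3) * c i := by
        linear_combination (c i * c j) * h1
          - (2 * (((i:ℤ)+7)^2 - 3) * c j) * hdci
          + (2 * (((j:ℤ)+7)^2 - 3) * c i) * hdcj
      have h24 : (24 * P N) * (((i:ℤ)+7)^2) = (24 * P N) * (((j:ℤ)+7)^2) := by
        unfold c at key
        linear_combination key
      have hsq : (((i:ℤ)+7)^2) = (((j:ℤ)+7)^2) :=
        mul_left_cancel₀ (by positivity) h24
      have hki := k_big i
      have hkj := k_big j
      have hij' : (i:ℤ) + 7 = (j:ℤ) + 7 := by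
        have h1 : (i:ℤ) + 7 ≤ (j:ℤ) + 7 := by nlinarith
        have h2 : (j:ℤ) + 7 ≤ (i:ℤ) + 7 := by nlinarith
        linarith
      exact_mod_cast (by linarith : (i:ℤ) = (j:ℤ))
    rw [Finset.card_image_of_injOn hinj, Finset.card_range]
  · intro p hp
    rcases Finset.mem_image.mp hp with ⟨i, hi, rfl⟩
    have hd := d_pos N i
    have hk := k_big i
    have hdc := d_mul_c N i hi
    have hkk : ((i:ℤ)+7)^2 - 6*((i:ℤ)+7) - 3 ≥ 0 := by nlinarith
    have hkpos : (0:ℤ) < (i:ℤ)+7 := by linarith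
    refine ⟨?_, ?_, ?_, ?_, ?_⟩
    · simp only [f]; nlinarith [mul_nonneg hd.le hkk]
    · simp only [f]; nlinarith [mul_pos hd hkpos]
    · simp only [f]; nlinarith [mul_nonneg hd.le hkk]
    · simp only [f]
      have h2 : (2 * (d N i * (((i:ℤ)+7)^2 - 3)))^2
          + (d N i * (((i:ℤ)+7)^2 - 3) + 3*(2*((i:ℤ)+7)*d N i))^2
          + (d N i * (((i:ℤ)+7)^2 - 3) - 3*(2*((i:ℤ)+7)*d N i))^2
          = 6 * (d N i * c i)^2 := by
        unfold c; ring
      rw [h2, hdc]; ring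
    · simp only [f]
      have h4 : (2 * (d N i * (((i:ℤ)+7)^2 - 3)))^4
          + (d N i * (((i:ℤ)+7)^2 - 3) + 3*(2*((i:ℤ)+7)*d N i))^4
          + (d N i * (((i:ℤ)+7)^2 - 3) - 3*(2*((i:ℤ)+7)*d N i))^4
          = 18 * (d N i * c i)^4 := by
        unfold c; ring
      rw [h4, hdc]; ring
end

section
/- For every positive integer N there exists a pair of positive integers (λ, ζ) such that the system λ = u² + v² + w², ζ = u²v² + u²w² + v²w² has at least N distinct integral solutions with u ≥ v ≥ w ≥ 0. -/
private def nm (a b : ℤ) : ℤ := a ^ 2 + a * b + b ^ 2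

private lemma nm_mul (a b c d : ℤ) :
    nm a b * nm c d = nm (a * c - b * d) (a * d + b * c + b * d) := by
  unfold nm; ring

/-- Normalization into the sector `v ≥ w ≥ 0`, preserving non-divisibility by 7. -/
private lemma nmNormalize (a b : ℤ) : ∃ v w : ℤ, w ≤ v ∧ 0 ≤ w ∧ nm v w = nm a b ∧
    (¬((7:ℤ) ∣ a ∧ (7:ℤ) ∣ b) → ¬((7:ℤ) ∣ v ∧ (7:ℤ) ∣ w)) := by
  have step : ∃ x y : ℤ, 0 ≤ x ∧ 0 ≤ y ∧ nm x y = nm a b ∧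
      (¬((7:ℤ) ∣ a ∧ (7:ℤ) ∣ b) → ¬((7:ℤ) ∣ x ∧ (7:ℤ) ∣ y)) := by
    rcases le_or_gt 0 a with ha | ha <;> rcases le_or_gt 0 b with hb | hb
    · exact ⟨a, b, ha, hb, rfl, fun h => h⟩
    · rcases le_or_gt 0 (a + b) with hab | hab
      · exact ⟨a + b, -b, by omega, by omega, by unfold nm; ring, by omega⟩
      · exact ⟨-a - b, a, by omega, ha, by unfold nm; ring, by omega⟩
    · rcases le_or_gt 0 (a + b) with hab | hab
      · exact ⟨a + b, -a, by omega, by omega, by unfold nm; ring, by omega⟩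
      · exact ⟨-a - b, b, by omega, hb, by unfold nm; ring, by omega⟩
    · exact ⟨-a, -b, by omega, by omega, by unfold nm; ring, by omega⟩
  obtain ⟨x, y, hx, hy, hnm, hJ⟩ := step
  rcases le_total y x with hxy | hxy
  · exact ⟨x, y, hxy, hy, hnm, hJ⟩
  · refine ⟨y, x, hxy, hx, ?_, by tauto⟩
    rw [hnm.symm]; unfold nm; ring

/-- Key lemma: arbitrarily many representations of a common value of the form. -/
private lemma key (n : ℕ) : ∃ (q a b : ℤ), 0 < q ∧ nm a b = q ∧
    ¬((7:ℤ) ∣ a ∧ (7:ℤ) ∣ b) ∧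
    ∃ T : Finset (ℤ × ℤ), n ≤ T.card ∧
      ∀ p ∈ T, p.2 ≤ p.1 ∧ 0 ≤ p.2 ∧ nm p.1 p.2 = q := by
  induction n with
  | zero =>
      exact ⟨1, 1, 0, one_pos, by unfold nm; ring, by omega, ∅, by simp, by simp⟩
  | succ n ih =>
      obtain ⟨q, a, b, hq, hab, hJ, T, hcard, hT⟩ := ih
      -- choose a multiplier of norm 49 keeping the divisibility invariant
      have hβ : ∃ a' b' : ℤ, nm a' b' = 49 * q ∧ ¬((7:ℤ) ∣ a' ∧ (7:ℤ) ∣ b') := by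
        by_cases h3 : (7:ℤ) ∣ (a + 3 * b)
        · -- multiply by (-3, 8), of norm 49
          refine ⟨a * (-3) - b * 8, a * 8 + b * (-3) + b * 8, ?_, by omega⟩
          have h := nm_mul a b (-3) 8
          have h49 : nm (-3) 8 = 49 := by unfold nm; ring
          rw [h49, hab] at h
          linarith [h]
        · -- multiply by (5, -8), of norm 49
          refine ⟨a * 5 - b * (-8), a * (-8) + b * 5 + b * (-8), ?_, by omega⟩
          have h := nm_mul a b 5 (-8)
          have h49 : nm 5 (-8) = 49 := by unfold nm; ring
          rw [h49, hab] at h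
          linarith [h]
      obtain ⟨a', b', ha'b', hJ'⟩ := hβ
      obtain ⟨v, w, hvw, hw0, hnmvw, hJvw⟩ := nmNormalize a' b'
      have hJv : ¬((7:ℤ) ∣ v ∧ (7:ℤ) ∣ w) := hJvw hJ'
      have hnmv : nm v w = 49 * q := by rw [hnmvw, ha'b']
      -- new set: scale old reps by 7 and insert the new one
      set f : ℤ × ℤ → ℤ × ℤ := fun p => (7 * p.1, 7 * p.2) with hf
      have hinj : Function.Injective f := by
        intro p p' h
        simp only [hf, Prod.ext_iff] at h ⊢
        omega
      have hnotmem : (v, w) ∉ T.image f := by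
        intro hmem
        obtain ⟨p, _, hp⟩ := Finset.mem_image.mp hmem
        simp only [hf, Prod.ext_iff] at hp
        exact hJv ⟨⟨p.1, hp.1.symm⟩, ⟨p.2, hp.2.symm⟩⟩
      refine ⟨49 * q, a', b', by linarith, ha'b', hJ', insert (v, w) (T.image f), ?_, ?_⟩
      · rw [Finset.card_insert_of_notMem hnotmem, Finset.card_image_of_injective _ hinj]
        omega
      · intro p hp
        rcases Finset.mem_insert.mp hp with rfl | hp
        · exact ⟨hvw, hw0, hnmv⟩
        · obtain ⟨r, hr, rfl⟩ := Finset.mem_image.mp hp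
          obtain ⟨h1, h2, h3⟩ := hT r hr
          refine ⟨by simp only [hf]; omega, by simp only [hf]; omega, ?_⟩
          simp only [hf]
          have h49 : nm (7 * r.1) (7 * r.2) = 49 * nm r.1 r.2 := by unfold nm; ring
          rw [h49, h3]

/-- Lemma 5.8: the system `λ = u² + v² + w²`, `ζ = u²v² + u²w² + v²w²` admits
arbitrarily many ordered nonnegative integer solutions. -/
theorem stmt7 (N : ℕ) (hN : 0 < N) :
    ∃ lam zeta : ℤ, 0 < lam ∧ 0 < zeta ∧ ∃ S : Finset (ℤ × ℤ × ℤ),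
      N ≤ S.card ∧ ∀ p ∈ S,
        p.1 ≥ p.2.1 ∧ p.2.1 ≥ p.2.2 ∧ p.2.2 ≥ 0 ∧
        lam = p.1 ^ 2 + p.2.1 ^ 2 + p.2.2 ^ 2 ∧
        zeta = p.1 ^ 2 * p.2.1 ^ 2 + p.1 ^ 2 * p.2.2 ^ 2 + p.2.1 ^ 2 * p.2.2 ^ 2 := by
  obtain ⟨q, a, b, hq, -, -, T, hcard, hT⟩ := key N
  set g : ℤ × ℤ → ℤ × ℤ × ℤ := fun p => (p.1 + p.2, p.1, p.2) with hg
  have hinj : Function.Injective g := by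
    intro p p' h
    simp only [hg, Prod.ext_iff] at h ⊢
    omega
  refine ⟨2 * q, q * q, by linarith, by positivity, T.image g, ?_, ?_⟩
  · rw [Finset.card_image_of_injective _ hinj]; exact hcard
  · intro p hp
    obtain ⟨r, hr, rfl⟩ := Finset.mem_image.mp hp
    obtain ⟨h1, h2, h3⟩ := hT r hr
    simp only [hg]
    unfold nm at h3
    refine ⟨by omega, by omega, by omega, by linear_combination (-2) * h3,
      by linear_combination (-(q + (r.1 ^ 2 + r.1 * r.2 + r.2 ^ 2))) * h3⟩
end

section
/- For every positive integer N there exist integers s and t such that there are at least N distinct triples (u, v, w) of integers with u ≥ v ≥ w ≥ 0 and some c > 5u satisfying s = c² − (u² + v² + w²) and t = c⁴ − c²(u² + v² + w²) + (u²v² + u²w² + v²w²), all with the same value of c. -/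
/-- Powers of an Eisenstein-type element of norm `49` for the form `x² + xy + y²`. -/
def pq : ℕ → ℤ × ℤ
  | 0 => (1, 0)
  | j + 1 => (3 * (pq j).1 - 5 * (pq j).2, 5 * (pq j).1 + 8 * (pq j).2)

lemma pq_f (j : ℕ) : (pq j).1 ^ 2 + (pq j).1 * (pq j).2 + (pq j).2 ^ 2 = 49 ^ j := by
  induction j with
  | zero => simp [pq]
  | succ j ih =>
      have : (pq (j+1)).1 = 3 * (pq j).1 - 5 * (pq j).2 := rfl
      have h2 : (pq (j+1)).2 = 5 * (pq j).1 + 8 * (pq j).2 := rfl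
      rw [this, h2, pow_succ]
      linear_combination 49 * ih

lemma pq_mod7 (j : ℕ) :
    (((pq j).1 : ZMod 7) = 1 ∧ ((pq j).2 : ZMod 7) = 0) ∨
    (((pq j).1 : ZMod 7) = 3 ∧ ((pq j).2 : ZMod 7) = 5) ∨
    (((pq j).1 : ZMod 7) = 5 ∧ ((pq j).2 : ZMod 7) = 6) ∨
    (((pq j).1 : ZMod 7) = 6 ∧ ((pq j).2 : ZMod 7) = 3) := by
  induction j with
  | zero => left; simp [pq]
  | succ j ih =>
      have e1 : ((pq (j+1)).1 : ZMod 7)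
          = 3 * ((pq j).1 : ZMod 7) - 5 * ((pq j).2 : ZMod 7) := by
        have : (pq (j+1)).1 = 3 * (pq j).1 - 5 * (pq j).2 := rfl
        rw [this]; push_cast; ring
      have e2 : ((pq (j+1)).2 : ZMod 7)
          = 5 * ((pq j).1 : ZMod 7) + 8 * ((pq j).2 : ZMod 7) := by
        have : (pq (j+1)).2 = 5 * (pq j).1 + 8 * (pq j).2 := rfl
        rw [this]; push_cast; ring
      rcases ih with ⟨h1, h2⟩ | ⟨h1, h2⟩ | ⟨h1, h2⟩ | ⟨h1, h2⟩ <;>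
        rw [e1, e2, h1, h2] <;> decide

lemma pq_not_dvd (j : ℕ) : ¬ ((7:ℤ) ∣ (pq j).1 ∧ (7:ℤ) ∣ (pq j).2) := by
  rintro ⟨h1, h2⟩
  have c1 : ((pq j).1 : ZMod 7) = 0 := by
    exact_mod_cast (ZMod.intCast_zmod_eq_zero_iff_dvd _ 7).mpr (by exact_mod_cast h1)
  have c2 : ((pq j).2 : ZMod 7) = 0 := by
    exact_mod_cast (ZMod.intCast_zmod_eq_zero_iff_dvd _ 7).mpr (by exact_mod_cast h2)
  rcases pq_mod7 j with ⟨h, -⟩ | ⟨h, -⟩ | ⟨h, -⟩ | ⟨h, -⟩ <;>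
    rw [c1] at h <;> exact absurd h (by decide)

/-- Reduction of a representation of `x² + xy + y²` to the fundamental domain
`a ≥ b ≥ 0`, keeping track of common divisors. -/
lemma reduce_nonneg (x y : ℤ) (hx : 0 ≤ x) :
    ∃ a b : ℤ, 0 ≤ a ∧ 0 ≤ b ∧
      a ^ 2 + a * b + b ^ 2 = x ^ 2 + x * y + y ^ 2 ∧
      ∀ d : ℤ, (d ∣ a ∧ d ∣ b) ↔ (d ∣ x ∧ d ∣ y) := by
  rcases le_or_gt 0 y with hy | hy
  · exact ⟨x, y, hx, hy, by ring, fun d => Iff.rfl⟩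
  · rcases le_or_gt 0 (x + y) with hxy | hxy
    · refine ⟨-y, x + y, by omega, hxy, by ring, fun d => ⟨?_, ?_⟩⟩
      · rintro ⟨h1, h2⟩
        have hdx : d ∣ x := by
          have h := dvd_add h2 h1
          rwa [show x + y + -y = x by ring] at h
        exact ⟨hdx, (dvd_neg).mp h1⟩
      · rintro ⟨h1, h2⟩
        exact ⟨(dvd_neg).mpr h2, dvd_add h1 h2⟩
    · refine ⟨-x - y, x, by omega, hx, by ring, fun d => ⟨?_, ?_⟩⟩
      · rintro ⟨h1, h2⟩
        have hdy : d ∣ y := by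
          have h := dvd_add h1 h2
          have h' := (dvd_neg).mpr h
          rwa [show -(-x - y + x) = y by ring] at h'
        exact ⟨h2, hdy⟩
      · rintro ⟨h1, h2⟩
        refine ⟨?_, h1⟩
        have h := dvd_add h1 h2
        rw [show -x - y = -(x + y) by ring]
        exact (dvd_neg).mpr h

lemma reduce (x y : ℤ) :
    ∃ a b : ℤ, b ≤ a ∧ 0 ≤ b ∧
      a ^ 2 + a * b + b ^ 2 = x ^ 2 + x * y + y ^ 2 ∧
      ∀ d : ℤ, (d ∣ a ∧ d ∣ b) ↔ (d ∣ x ∧ d ∣ y) := by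
  have main : ∀ x y : ℤ, 0 ≤ x → ∃ a b : ℤ, b ≤ a ∧ 0 ≤ b ∧
      a ^ 2 + a * b + b ^ 2 = x ^ 2 + x * y + y ^ 2 ∧
      ∀ d : ℤ, (d ∣ a ∧ d ∣ b) ↔ (d ∣ x ∧ d ∣ y) := by
    intro x y hx
    obtain ⟨a, b, ha, hb, heq, hdvd⟩ := reduce_nonneg x y hx
    rcases le_total b a with hba | hab
    · exact ⟨a, b, hba, hb, heq, hdvd⟩
    · refine ⟨b, a, hab, ha, by linear_combination heq, ?_⟩
      intro d; rw [and_comm]; exact hdvd d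
  rcases le_or_gt 0 x with hx | hx
  · exact main x y hx
  · obtain ⟨a, b, hba, hb, heq, hdvd⟩ := main (-x) (-y) (by omega)
    refine ⟨a, b, hba, hb, by rw [heq]; ring, fun d => ?_⟩
    rw [hdvd d, dvd_neg, dvd_neg]

/-- The numerical heart of Proposition 5.3: for every `N` there are Chern
classes `(s, t)` realized, with a single `c > 5u`, by at least `N` distinct
parameter triples `(u, v, w)` with `u ≥ v ≥ w ≥ 0`. -/
theorem stmt16 (N : ℕ) (hN : 0 < N) :
    ∃ s t c : ℤ, ∃ S : Finset (ℤ × ℤ × ℤ),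
      N ≤ S.card ∧ ∀ p ∈ S,
        p.1 ≥ p.2.1 ∧ p.2.1 ≥ p.2.2 ∧ p.2.2 ≥ 0 ∧ c > 5 * p.1 ∧
        s = c ^ 2 - (p.1 ^ 2 + p.2.1 ^ 2 + p.2.2 ^ 2) ∧
        t = c ^ 4 - c ^ 2 * (p.1 ^ 2 + p.2.1 ^ 2 + p.2.2 ^ 2) +
          (p.1 ^ 2 * p.2.1 ^ 2 + p.1 ^ 2 * p.2.2 ^ 2 + p.2.1 ^ 2 * p.2.2 ^ 2) := by
  classical
  set m : ℕ := N - 1 with hm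
  set n : ℤ := 7 ^ (2 * m) with hn
  have hn1 : (1:ℤ) ≤ n := one_le_pow₀ (by norm_num)
  set c : ℤ := 11 * n + 1 with hc
  have key : ∀ j : ℕ, ∃ a b : ℤ, b ≤ a ∧ 0 ≤ b ∧
      a ^ 2 + a * b + b ^ 2 = 7 ^ (2 * (m - j)) * 49 ^ j ∧
      ∀ d : ℤ, (d ∣ a ∧ d ∣ b) ↔
        (d ∣ 7 ^ (m - j) * (pq j).1 ∧ d ∣ 7 ^ (m - j) * (pq j).2) := by
    intro j
    obtain ⟨a, b, hba, hb, heq, hdvd⟩ :=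
      reduce (7 ^ (m - j) * (pq j).1) (7 ^ (m - j) * (pq j).2)
    refine ⟨a, b, hba, hb, ?_, hdvd⟩
    rw [heq]
    have : (7 ^ (m - j) * (pq j).1) ^ 2 + 7 ^ (m - j) * (pq j).1 * (7 ^ (m - j) * (pq j).2)
        + (7 ^ (m - j) * (pq j).2) ^ 2
        = (7:ℤ) ^ (2 * (m - j)) * ((pq j).1 ^ 2 + (pq j).1 * (pq j).2 + (pq j).2 ^ 2) := by
      rw [two_mul, pow_add]; ring
    rw [this, pq_f]
  choose A B hBA hB0 hf hdvd using key
  have hval : ∀ j ≤ m, A j ^ 2 + A j * B j + B j ^ 2 = n := by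
    intro j hj
    rw [hf j, show (49:ℤ) = 7 ^ 2 by norm_num, ← pow_mul, ← pow_add, hn]
    congr 1
    omega
  have hA0 : ∀ j, 0 ≤ A j := fun j => le_trans (hB0 j) (hBA j)
  have hsq : ∀ z : ℤ, 0 ≤ z → z ≤ z ^ 2 := by
    intro z hz
    rcases eq_or_lt_of_le hz with h | h
    · simp [← h]
    · nlinarith
  have hbound : ∀ j ≤ m, 5 * (A j + B j) < c := by
    intro j hj
    have h1 := hsq (A j) (hA0 j)
    have h2 := hsq (B j) (hB0 j)
    have h3 := hval j hj
    have h4 : 0 ≤ A j * B j := mul_nonneg (hA0 j) (hB0 j)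
    rw [hc]; nlinarith
  -- injectivity via the exact power of 7 dividing both coordinates
  have hinjlt : ∀ j j', j ≤ m → j' ≤ m → j < j' → A j = A j' → B j = B j' → False := by
    intro j j' hj hj' hlt hA hB
    have d7 : (7:ℤ) ^ (m - j) ∣ A j ∧ (7:ℤ) ^ (m - j) ∣ B j :=
      (hdvd j (7 ^ (m - j))).mpr ⟨dvd_mul_right _ _, dvd_mul_right _ _⟩
    rw [hA, hB] at d7
    have d7' := (hdvd j' (7 ^ (m - j))).mp d7
    have hsplit : (7:ℤ) ^ (m - j) = 7 ^ (m - j') * 7 ^ (j' - j) := by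
      rw [← pow_add]; congr 1; omega
    have hne : (7:ℤ) ^ (m - j') ≠ 0 := pow_ne_zero _ (by norm_num)
    have dp : (7:ℤ) ^ (j' - j) ∣ (pq j').1 := by
      have := d7'.1
      rw [hsplit] at this
      exact (mul_dvd_mul_iff_left hne).mp this
    have dq : (7:ℤ) ^ (j' - j) ∣ (pq j').2 := by
      have := d7'.2
      rw [hsplit] at this
      exact (mul_dvd_mul_iff_left hne).mp this
    have h7 : (7:ℤ) ∣ 7 ^ (j' - j) := dvd_pow_self 7 (by omega)
    exact pq_not_dvd j' ⟨h7.trans dp, h7.trans dq⟩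
  refine ⟨c ^ 2 - 2 * n, c ^ 4 - c ^ 2 * (2 * n) + n ^ 2, c,
    (Finset.range N).image (fun j => (A j + B j, A j, B j)), ?_, ?_⟩
  · rw [Finset.card_image_of_injOn, Finset.card_range]
    intro j hj j' hj' heq
    simp only [Finset.coe_range, Set.mem_Iio] at hj hj'
    have hjm : j ≤ m := by omega
    have hj'm : j' ≤ m := by omega
    have hA : A j = A j' := congrArg (fun p => p.2.1) heq
    have hB : B j = B j' := congrArg (fun p => p.2.2) heq
    rcases lt_trichotomy j j' with h | h | h
    · exact absurd (hinjlt j j' hjm hj'm h hA hB) (fun x => x)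
    · exact h
    · exact absurd (hinjlt j' j hj'm hjm h hA.symm hB.symm) (fun x => x)
  · intro p hp
    simp only [Finset.mem_image, Finset.mem_range] at hp
    obtain ⟨j, hjN, rfl⟩ := hp
    have hjm : j ≤ m := by omega
    have h3 := hval j hjm
    refine ⟨?_, ?_, ?_, ?_, ?_, ?_⟩
    · show A j + B j ≥ A j
      linarith [hB0 j]
    · exact hBA j
    · exact hB0 j
    · show c > 5 * (A j + B j)
      linarith [hbound j hjm]
    · show c ^ 2 - 2 * n = c ^ 2 - ((A j + B j) ^ 2 + A j ^ 2 + B j ^ 2)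
      linear_combination 2 * h3
    · show c ^ 4 - c ^ 2 * (2 * n) + n ^ 2
          = c ^ 4 - c ^ 2 * ((A j + B j) ^ 2 + A j ^ 2 + B j ^ 2) +
            ((A j + B j) ^ 2 * A j ^ 2 + (A j + B j) ^ 2 * B j ^ 2 + A j ^ 2 * B j ^ 2)
      linear_combination (2 * c ^ 2 - (A j ^ 2 + A j * B j + B j ^ 2) - n) * h3
end
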